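/- arXiv:2507.09187 — 4 statements merged into one kernel-verified Lean document; each statement's English description precedes it below -/
import Mathlib

section
/- A permutation π of [n] is 321-avoiding if and only if both the subsequence of π formed by its excedances (letters π_i with π_i > i) and the subsequence formed by the remaining letters are increasing. -/
open scoped Classical
noncomputable section

/-- Stack-sorting `S` implemented with fuel: `S(L n R) = S(L) S(R) n`. -/
def ssFuel : ℕ → List ℕ → List ℕ
  | 0, _ => []
  | _ + 1, [] => []
  | f + 1, x :: xs =>
    let l := x :: xs
    let m := l.foldr max 0
    let i := l.idxOf m
    ssFuel f (l.take i) ++ ssFuel f (l.drop (i + 1)) ++ [m]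

def stackSort (l : List ℕ) : List ℕ := ssFuel l.length l

/-- One-line word (with letters `1,…,n`) of a permutation of `Fin n`. -/
def word {n : ℕ} (π : Equiv.Perm (Fin n)) : List ℕ := List.ofFn fun i => (π i : ℕ) + 1

/-- The identity word `1 2 ⋯ n`. -/
def sortedWord (n : ℕ) : List ℕ := List.ofFn fun i : Fin n => (i : ℕ) + 1

/-- `π` is `t`-stack-sortable. -/
def StackSortable (t : ℕ) {n : ℕ} (π : Equiv.Perm (Fin n)) : Prop :=
  stackSort^[t] (word π) = sortedWord n

/-- `π` avoids the pattern `p`. -/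
def Avoids {n k : ℕ} (π : Equiv.Perm (Fin n)) (p : Equiv.Perm (Fin k)) : Prop :=
  ¬ ∃ f : Fin k → Fin n, StrictMono f ∧ ∀ a b : Fin k, p a < p b ↔ π (f a) < π (f b)

def p321 : Equiv.Perm (Fin 3) := Fin.revPerm
def p213 : Equiv.Perm (Fin 3) := Equiv.swap 0 1
def p231 : Equiv.Perm (Fin 3) := finRotate 3
def p132 : Equiv.Perm (Fin 3) := Equiv.swap 1 2

def mlw {n : ℕ} (π : Equiv.Perm (Fin n)) : ℕ :=
  (Finset.univ.filter fun j : Fin n => ∀ k, j < k → π j < π k).sup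
    fun j => (j : ℕ) - (π j : ℕ)

def fixNum {n : ℕ} (π : Equiv.Perm (Fin n)) : ℕ :=
  (Finset.univ.filter fun i => π i = i).card

def dropNum {n : ℕ} (π : Equiv.Perm (Fin n)) : ℕ :=
  (Finset.univ.filter fun i => π i < i).card

def desNum {n : ℕ} (π : Equiv.Perm (Fin n)) : ℕ :=
  (Finset.univ.filter fun i : Fin n =>
    ∃ h : (i : ℕ) + 1 < n, π ⟨(i : ℕ) + 1, h⟩ < π i).card

def badNum {n : ℕ} (π : Equiv.Perm (Fin n)) : ℕ :=
  (Finset.univ.filter fun i : Fin n =>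
    (∀ j, i < j → π i < π j) ∧
      ((i : ℕ) = 0 ∨
        π ⟨(i : ℕ) - 1, lt_of_le_of_lt (Nat.sub_le _ _) i.isLt⟩ < π i)).card

def invNum {n : ℕ} (π : Equiv.Perm (Fin n)) : ℕ :=
  (Finset.univ.filter fun p : Fin n × Fin n => p.1 < p.2 ∧ π p.2 < π p.1).card

/-- Binary trees with natural-number labels. -/
inductive BT : Type
  | leaf : BT
  | node : BT → ℕ → BT → BT
  deriving DecidableEq

/-- The increasing-binary-tree map `λ`, implemented with fuel. -/
def lamFuel : ℕ → List ℕ → BT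
  | 0, _ => .leaf
  | f + 1, [] => .leaf
  | f + 1, x :: xs =>
    let l := x :: xs
    let m := xs.foldr min x
    let i := l.idxOf m
    .node (lamFuel f (l.take i)) m (lamFuel f (l.drop (i + 1)))

def lam (l : List ℕ) : BT := lamFuel l.length l

/-- In-order reading word of a binary tree. -/
def BT.labels : BT → List ℕ
  | .leaf => []
  | .node l x r => l.labels ++ x :: r.labels

/-- Maximum number of right edges in a descending path starting at the root. -/
def rstart : BT → ℕ
  | .leaf => 0
  | .node l _ .leaf => rstart l
  | .node l _ r => max (rstart l) (1 + rstart r)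

/-- Maximum number of right edges in any descending path of the tree. -/
def rany : BT → ℕ
  | .leaf => 0
  | .node l x r => max (rstart (.node l x r)) (max (rany l) (rany r))

def BT.isLeaf : BT → Bool
  | .leaf => true
  | _ => false

/-- Does the tree contain a left edge? -/
def hasLeft : BT → Bool
  | .leaf => false
  | .node l _ r => (!l.isLeaf) || hasLeft l || hasLeft r

/-- The right arm of a tree: the list of pairs (label, left subtree) along the maximal
right path from the root. -/
def armSubs : BT → List (ℕ × BT)
  | .leaf => []
  | .node l x r => (x, l) :: armSubs r

/-- `lrrp`: one plus the maximal number of right edges in a restricted (right-arm-avoiding)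
descending path; `0` if the tree has no left edge. -/
def lrrp (T : BT) : ℕ :=
  if hasLeft T then 1 + ((armSubs T).map fun p => rany p.2).foldr max 0 else 0

/-- A pure right chain: no node has a left child. -/
def isRightChain : BT → Prop
  | .leaf => True
  | .node l _ r => l = .leaf ∧ isRightChain r

/-- Increasing binary tree: each label is smaller than all labels in its subtrees. -/
def Increasing : BT → Prop
  | .leaf => True
  | .node l x r =>
      (∀ y ∈ l.labels, x < y) ∧ (∀ y ∈ r.labels, x < y) ∧ Increasing l ∧ Increasing r

/-- `321`-avoiding tree: every right chain hangs off the right arm (equivalently, the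
path from the root to any right leaf has exactly one left edge), and the right chains are
ordered consistently with their attaching nodes. -/
def Is321Tree (T : BT) : Prop :=
  (∀ p ∈ armSubs T, isRightChain p.2) ∧
    ∀ p ∈ armSubs T, ∀ q ∈ armSubs T, p.2 ≠ BT.leaf → q.2 ≠ BT.leaf →
      (p.1 < q.1 ↔ ∀ a ∈ p.2.labels, ∀ b ∈ q.2.labels, a < b)

/-- Labels of nodes without right child. -/
def noRight : BT → List ℕ
  | .leaf => []
  | .node l x .leaf => noRight l ++ [x]
  | .node l x r => noRight l ++ noRight r

/-- Labels of the right leaves: nodes without right child not on the right arm. -/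
def rightLeafLabels (T : BT) : List ℕ :=
  ((armSubs T).map fun p => noRight p.2).flatten

/-- `a` is the value of a right-to-left minimum of the word `w`. -/
def IsRLMinVal (w : List ℕ) (a : ℕ) : Prop :=
  ∃ j, j < w.length ∧ w.getD j 0 = a ∧ ∀ k, j < k → k < w.length → a < w.getD k 0

/-- Insert `b` immediately before the first letter exceeding `b` (or at the end). -/
def insBefore (b : ℕ) : List ℕ → List ℕ
  | [] => [b]
  | x :: xs => if b < x then b :: x :: xs else x :: insBefore b xs

/-- The relocation `S_b`: delete `b` and reinsert it immediately before the leftmost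
letter to the right of its position that exceeds `b`, or at the end. -/
def reloc (b : ℕ) (w : List ℕ) : List ℕ :=
  w.take (w.idxOf b) ++ insBefore b (w.drop (w.idxOf b + 1))

/-- The descent tops of `w`, listed in increasing order. -/
def dtopList (w : List ℕ) : List ℕ :=
  (((List.range (w.length - 1)).filter fun i => w.getD (i + 1) 0 < w.getD i 0).map
      fun i => w.getD i 0).mergeSort fun a b => decide (a ≤ b)

lemma cardLt {n : ℕ} (π : Equiv.Perm (Fin n)) (v : Fin n) :
    (Finset.univ.filter fun k => π k < v).card = (v : ℕ) := by
  have h : (Finset.univ.filter fun k => π k < v) = (Finset.Iio v).image π.symm := by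
    ext k
    simp [Equiv.symm_apply_eq]
  rw [h, Finset.card_image_of_injective _ π.symm.injective, Fin.card_Iio]

lemma cardGt {n : ℕ} (π : Equiv.Perm (Fin n)) (v : Fin n) :
    (Finset.univ.filter fun k => v < π k).card = n - 1 - (v : ℕ) := by
  have h : (Finset.univ.filter fun k => v < π k) = (Finset.Ioi v).image π.symm := by
    ext k
    simp [Equiv.symm_apply_eq]
  rw [h, Finset.card_image_of_injective _ π.symm.injective, Fin.card_Ioi]

lemma pattern_of {n : ℕ} (π : Equiv.Perm (Fin n)) {i j k : Fin n}
    (h1 : i < j) (h2 : j < k) (h3 : π j < π i) (h4 : π k < π j) :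
    ∃ f : Fin 3 → Fin n, StrictMono f ∧ ∀ a b : Fin 3, p321 a < p321 b ↔ π (f a) < π (f b) := by
  refine ⟨![i, j, k], ?_, ?_⟩
  · intro a b hab
    fin_cases a <;> fin_cases b <;> simp_all <;>
      first | exact h1 | exact h2 | exact h1.trans h2 | exact absurd hab (by decide)
  · intro a b
    fin_cases a <;> fin_cases b <;>
      simp only [p321, Matrix.cons_val_zero, Matrix.cons_val_one, Matrix.head_cons,
        Matrix.cons_val_two, Matrix.tail_cons] <;>
      constructor <;> intro h <;>
      first
      | exact absurd h (by decide)
      | exact h3 | exact h4 | exact h4.trans h3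
      | exact absurd h (lt_asymm h3) | exact absurd h (lt_asymm h4)
      | exact absurd h (lt_asymm (h4.trans h3))
      | exact (lt_irrefl _ h).elim
      | decide

/-- `π` is 321-avoiding iff the subsequence of excedances and the subsequence of the
remaining letters are both increasing. -/
theorem stmt4 (n : ℕ) (π : Equiv.Perm (Fin n)) :
    Avoids π p321 ↔
      ((∀ i j : Fin n, i < j → i < π i → j < π j → π i < π j) ∧
        (∀ i j : Fin n, i < j → ¬ i < π i → ¬ j < π j → π i < π j)) := by
  constructor
  · intro hav
    constructor
    · intro i j hij hi hj
      by_contra hc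
      have hji : π j < π i :=
        lt_of_le_of_ne (not_lt.mp hc) fun h => hij.ne' (π.injective h)
      obtain ⟨k, hjk, hk⟩ : ∃ k, j < k ∧ π k < π j := by
        by_contra hno
        push_neg at hno
        have hsub : (Finset.univ.filter fun k => π k < π j) ⊆
            ((Finset.Iic j).erase j).erase i := by
          intro k hk
          simp only [Finset.mem_filter, Finset.mem_univ, true_and] at hk
          have h1 : k ≤ j := by
            by_contra hh
            exact absurd (hno k (not_le.mp hh)) (not_le.mpr hk)
          refine Finset.mem_erase.mpr ⟨?_, Finset.mem_erase.mpr ⟨?_, Finset.mem_Iic.mpr h1⟩⟩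
          · rintro rfl; exact lt_asymm hk hji
          · rintro rfl; exact lt_irrefl _ hk
        have hcard := Finset.card_le_card hsub
        rw [cardLt] at hcard
        rw [Finset.card_erase_of_mem (Finset.mem_erase.mpr ⟨hij.ne, Finset.mem_Iic.mpr hij.le⟩),
          Finset.card_erase_of_mem (Finset.mem_Iic.mpr le_rfl), Fin.card_Iic] at hcard
        have : (j : ℕ) < (π j : ℕ) := hj
        omega
      exact hav (pattern_of π hij hjk hji hk)
    · intro i j hij hi hj
      by_contra hc
      have hji : π j < π i :=
        lt_of_le_of_ne (not_lt.mp hc) fun h => hij.ne' (π.injective h)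
      obtain ⟨h, hhi, hh⟩ : ∃ h, h < i ∧ π i < π h := by
        by_contra hno
        push_neg at hno
        have hsub : (Finset.univ.filter fun k => π i < π k) ⊆
            ((Finset.Ici i).erase i).erase j := by
          intro k hk
          simp only [Finset.mem_filter, Finset.mem_univ, true_and] at hk
          have h1 : i ≤ k := by
            by_contra hh
            exact absurd hk (not_lt.mpr (hno k (not_le.mp hh)))
          refine Finset.mem_erase.mpr ⟨?_, Finset.mem_erase.mpr ⟨?_, Finset.mem_Ici.mpr h1⟩⟩
          · rintro rfl; exact lt_asymm hk hji
          · rintro rfl; exact lt_irrefl _ hk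
        have hcard := Finset.card_le_card hsub
        rw [cardGt] at hcard
        rw [Finset.card_erase_of_mem (Finset.mem_erase.mpr ⟨hij.ne', Finset.mem_Ici.mpr hij.le⟩),
          Finset.card_erase_of_mem (Finset.mem_Ici.mpr le_rfl), Fin.card_Ici] at hcard
        have h1 : (π i : ℕ) ≤ (i : ℕ) := not_lt.mp hi
        have h2 : (i : ℕ) < (j : ℕ) := hij
        have h3 : (j : ℕ) < n := j.isLt
        omega
      exact hav (pattern_of π hhi hij hh hji)
  · rintro ⟨h1, h2⟩ ⟨f, hm, hr⟩
    have e10 : π (f 1) < π (f 0) := (hr 1 0).mp (by decide)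
    have e21 : π (f 2) < π (f 1) := (hr 2 1).mp (by decide)
    have m01 : f 0 < f 1 := hm (by decide)
    have m12 : f 1 < f 2 := hm (by decide)
    by_cases c0 : f 0 < π (f 0) <;> by_cases c1 : f 1 < π (f 1) <;> by_cases c2 : f 2 < π (f 2) <;>
      first
      | exact absurd (h1 _ _ m01 c0 c1) (lt_asymm e10)
      | exact absurd (h1 _ _ m12 c1 c2) (lt_asymm e21)
      | exact absurd (h2 _ _ m01 c0 c1) (lt_asymm e10)
      | exact absurd (h2 _ _ m12 c1 c2) (lt_asymm e21)
      | exact absurd (h1 _ _ (m01.trans m12) c0 c2) (lt_asymm (e21.trans e10))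
      | exact absurd (h2 _ _ (m01.trans m12) c0 c2) (lt_asymm (e21.trans e10))


end
end

section
/- Let π be a 321-avoiding permutation of [n] and t ≥ 1. Then π avoids the pattern 23⋯(t+2)1 if and only if mlw(π) ≤ t, where mlw(π) is the maximum of j − π_j over all right-to-left minima π_j of π. -/
open scoped Classical
noncomputable section

lemma no321 {n : ℕ} {π : Equiv.Perm (Fin n)} (h : Avoids π p321)
    {i1 i2 i3 : Fin n} (h12 : i1 < i2) (h23 : i2 < i3)
    (v21 : π i2 < π i1) (v32 : π i3 < π i2) : False := by
  have v31 : π i3 < π i1 := v32.trans v21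
  apply h
  refine ⟨fun a => if (a:ℕ) = 0 then i1 else if (a:ℕ) = 1 then i2 else i3, ?_, ?_⟩
  · intro a b hab
    rw [Fin.lt_def] at hab
    obtain ⟨av, ha⟩ := a
    obtain ⟨bv, hb⟩ := b
    simp only at hab ⊢
    interval_cases av <;> interval_cases bv <;> simp <;>
      first
        | exact h12 | exact h23 | exact h12.trans h23 | omega
  · intro a b
    rw [show p321 a = a.rev from rfl, show p321 b = b.rev from rfl, Fin.rev_lt_rev,
      Fin.lt_def]
    rw [Fin.lt_def] at v21 v32 v31
    obtain ⟨av, ha⟩ := a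
    obtain ⟨bv, hb⟩ := b
    simp only
    interval_cases av <;> interval_cases bv <;>
      simp only [Fin.lt_def] <;> split_ifs <;>
      (constructor <;> intro <;> first | omega | exact (‹False›).elim)

lemma card_filter_perm_lt {n : ℕ} (π : Equiv.Perm (Fin n)) (c : Fin n) :
    (Finset.univ.filter fun i => π i < c).card = (c : ℕ) := by
  have : (Finset.univ.filter fun i => π i < c) = (Finset.Iio c).map π.symm.toEmbedding := by
    ext i
    simp [Equiv.symm_apply_eq, eq_comm]
  rw [this, Finset.card_map, Fin.card_Iio]

/-- A 321-avoiding `π` avoids the pattern `23⋯(t+2)1` iff `mlw(π) ≤ t`. -/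
theorem stmt6 (n t : ℕ) (ht : 1 ≤ t) (π : Equiv.Perm (Fin n)) (h : Avoids π p321) :
    Avoids π (finRotate (t + 2)) ↔ mlw π ≤ t := by
  have hrot : ∀ a : Fin (t + 2), ((finRotate (t + 2)) a : ℕ)
      = if (a:ℕ) < t + 1 then (a:ℕ) + 1 else 0 := by
    intro a
    rw [finRotate_succ_apply, Fin.val_add_one]
    have hlt := a.isLt
    by_cases hc : (a:ℕ) < t + 1
    · rw [if_neg, if_pos hc]
      intro he
      rw [he, Fin.val_last] at hc
      omega
    · rw [if_pos, if_neg hc]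
      apply Fin.ext
      rw [Fin.val_last]
      omega
  constructor
  · -- Avoids → mlw ≤ t
    intro hav
    by_contra hm
    push_neg at hm
    rw [mlw, Finset.lt_sup_iff] at hm
    obtain ⟨j, hjmem, hjt⟩ := hm
    rw [Finset.mem_filter] at hjmem
    have hrl : ∀ k, j < k → π j < π k := hjmem.2
    have hle : (π j : ℕ) + (t + 1) ≤ (j : ℕ) := by omega
    set S : Finset (Fin n) := Finset.univ.filter (fun i => i < j ∧ π j < π i) with hSdef
    have hAsub : (Finset.univ.filter fun i => π i < π j) ⊆ Finset.Iio j := by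
      intro i hi
      rw [Finset.mem_filter] at hi
      rw [Finset.mem_Iio]
      rcases lt_trichotomy i j with hc | hc | hc
      · exact hc
      · exact absurd hi.2 (by rw [hc]; exact lt_irrefl _)
      · exact absurd (hrl i hc) (not_lt.mpr hi.2.le)
    have hS : S = Finset.Iio j \ (Finset.univ.filter fun i => π i < π j) := by
      ext i
      simp only [hSdef, Finset.mem_filter, Finset.mem_sdiff, Finset.mem_Iio,
        Finset.mem_univ, true_and]
      constructor
      · rintro ⟨h1, h2⟩
        exact ⟨h1, by simp [not_lt, h2.le]⟩
      · rintro ⟨h1, h2⟩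
        simp only [not_lt] at h2
        refine ⟨h1, lt_of_le_of_ne h2 ?_⟩
        intro he
        exact absurd (π.injective he) (ne_of_gt h1)
    have hScard : t + 1 ≤ S.card := by
      rw [hS, Finset.card_sdiff_of_subset hAsub, Fin.card_Iio, card_filter_perm_lt]
      omega
    set g := S.orderEmbOfCardLe hScard with hgdef
    have hgS : ∀ k : Fin (t + 1), g k ∈ S := fun k => S.orderEmbOfCardLe_mem hScard k
    have hglt : ∀ k, g k < j := by
      intro k
      have := hgS k
      rw [hSdef, Finset.mem_filter] at this
      exact this.2.1
    have hgv : ∀ k, π j < π (g k) := by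
      intro k
      have := hgS k
      rw [hSdef, Finset.mem_filter] at this
      exact this.2.2
    have hπg : StrictMono (fun k : Fin (t + 1) => π (g k)) := by
      intro k1 k2 hk
      by_contra hc
      push_neg at hc
      have hne : π (g k2) ≠ π (g k1) := by
        intro he
        exact absurd (π.injective he) (ne_of_gt (g.strictMono hk))
      exact no321 h (g.strictMono hk) (hglt k2) (lt_of_le_of_ne hc hne) (hgv k2)
    apply hav
    refine ⟨fun a : Fin (t + 2) => if hc : (a:ℕ) < t + 1 then g ⟨a, hc⟩ else j, ?_, ?_⟩
    · intro a b hab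
      rw [Fin.lt_def] at hab
      have hbb := b.isLt
      by_cases hb : (b:ℕ) < t + 1
      · have ha : (a:ℕ) < t + 1 := by omega
        simp only [dif_pos ha, dif_pos hb]
        exact g.strictMono (by rw [Fin.mk_lt_mk]; exact hab)
      · by_cases ha : (a:ℕ) < t + 1
        · simp only [dif_pos ha, dif_neg hb]
          exact hglt _
        · omega
    · intro a b
      rw [Fin.lt_def, hrot, hrot]
      by_cases ha : (a:ℕ) < t + 1 <;> by_cases hb : (b:ℕ) < t + 1
      · simp only [dif_pos ha, dif_pos hb, if_pos ha, if_pos hb]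
        rw [show (π (g ⟨a, ha⟩) < π (g ⟨b, hb⟩)) ↔ (⟨(a:ℕ), ha⟩ : Fin (t+1)) < ⟨(b:ℕ), hb⟩
          from hπg.lt_iff_lt, Fin.mk_lt_mk]
        omega
      · simp only [dif_pos ha, dif_neg hb, if_pos ha, if_neg hb]
        exact iff_of_false (by omega) (not_lt.mpr (hgv _).le)
      · simp only [dif_neg ha, dif_pos hb, if_neg ha, if_pos hb]
        exact iff_of_true (by omega) (hgv _)
      · simp only [dif_neg ha, dif_neg hb, if_neg ha, if_neg hb]
        exact iff_of_false (by omega) (lt_irrefl _)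
  · -- mlw ≤ t → Avoids
    intro hm
    rintro ⟨f, hmono, hiff⟩
    set l : Fin (t + 2) := Fin.last (t + 1) with hldef
    have hvlast : ∀ a : Fin (t + 2), a ≠ l → π (f l) < π (f a) := by
      intro a hane
      rw [← hiff, Fin.lt_def, hrot, hrot]
      have halt : (a:ℕ) < t + 1 := by
        have h1 := a.isLt
        have h2 : (a:ℕ) ≠ t + 1 := by
          intro he
          exact hane (Fin.ext (by rw [hldef, Fin.val_last, he]))
        omega
      rw [if_pos halt, if_neg (by rw [hldef, Fin.val_last]; omega)]
      omega
    have hlast_lt : ∀ a : Fin (t + 2), a ≠ l → f a < f l := by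
      intro a hane
      apply hmono
      rw [Fin.lt_def, hldef, Fin.val_last]
      have h1 := a.isLt
      have h2 : (a:ℕ) ≠ t + 1 := by
        intro he
        exact hane (Fin.ext (by rw [hldef, Fin.val_last, he]))
      omega
    set T : Finset (Fin n) := Finset.univ.filter (fun k => f l ≤ k) with hTdef
    have hTne : T.Nonempty := ⟨f l, by simp [hTdef]⟩
    obtain ⟨j, hjT, hjmin⟩ := T.exists_min_image π hTne
    have hfj : f l ≤ j := by
      rw [hTdef, Finset.mem_filter] at hjT
      exact hjT.2
    have hπjf : π j ≤ π (f l) := hjmin _ (by simp [hTdef])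
    have hrl : ∀ k, j < k → π j < π k := by
      intro k hk
      have hkT : k ∈ T := by
        rw [hTdef, Finset.mem_filter]
        exact ⟨Finset.mem_univ _, hfj.trans hk.le⟩
      exact lt_of_le_of_ne (hjmin k hkT) (fun he => (ne_of_gt hk) (π.injective he).symm)
    set A : Finset (Fin n) := Finset.univ.filter (fun i => π i < π j) with hAdef
    set B : Finset (Fin n) := (Finset.univ.filter (fun a : Fin (t + 2) => a ≠ l)).image f
      with hBdef
    have hA : A ⊆ Finset.Iio j := by
      intro i hi
      rw [hAdef, Finset.mem_filter] at hi
      rw [Finset.mem_Iio]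
      rcases lt_trichotomy i j with hc | hc | hc
      · exact hc
      · exact absurd hi.2 (by rw [hc]; exact lt_irrefl _)
      · exact absurd (hrl i hc) (not_lt.mpr hi.2.le)
    have hB : B ⊆ Finset.Iio j := by
      intro i hi
      rw [hBdef, Finset.mem_image] at hi
      obtain ⟨a, haf, rfl⟩ := hi
      rw [Finset.mem_filter] at haf
      rw [Finset.mem_Iio]
      exact lt_of_lt_of_le (hlast_lt a haf.2) hfj
    have hdisj : Disjoint A B := by
      rw [Finset.disjoint_left]
      intro x hxA hxB
      rw [hAdef, Finset.mem_filter] at hxA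
      rw [hBdef, Finset.mem_image] at hxB
      obtain ⟨a, haf, rfl⟩ := hxB
      rw [Finset.mem_filter] at haf
      exact absurd (hπjf.trans_lt (hvlast a haf.2)) (not_lt.mpr hxA.2.le)
    have hcardA : A.card = (π j : ℕ) := card_filter_perm_lt π (π j)
    have hcardB : B.card = t + 1 := by
      rw [hBdef, Finset.card_image_of_injective _ hmono.injective, Finset.filter_ne',
        Finset.card_erase_of_mem (Finset.mem_univ _), Finset.card_univ, Fintype.card_fin]
      omega
    have hcount : (π j : ℕ) + (t + 1) ≤ (j : ℕ) := by
      have h1 : (A ∪ B).card ≤ (Finset.Iio j).card :=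
        Finset.card_le_card (Finset.union_subset hA hB)
      rw [Finset.card_union_of_disjoint hdisj, hcardA, hcardB, Fin.card_Iio] at h1
      exact h1
    have hjmem : j ∈ Finset.univ.filter fun j : Fin n => ∀ k, j < k → π j < π k := by
      rw [Finset.mem_filter]
      exact ⟨Finset.mem_univ _, hrl⟩
    have hfin : (j : ℕ) - (π j : ℕ) ≤ mlw π :=
      Finset.le_sup (f := fun j : Fin n => (j : ℕ) - (π j : ℕ)) hjmem
    omega


end
end

section
/- For every t ≥ 1, the set of t-stack-sortable 321-avoiding permutations of [n] equals the set of permutations of [n] avoiding both 321 and the pattern 23⋯(t+2)1. -/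
open scoped Classical
noncomputable section

/-! ### auxiliary development for stmt7 -/
section Stmt7Aux

lemma ssFuel_nil (f : ℕ) : ssFuel f [] = [] := by cases f <;> rfl

lemma stackSort_nil : stackSort [] = [] := rfl

lemma foldr_max_mem : ∀ (l : List ℕ), l ≠ [] → l.foldr max 0 ∈ l := by
  intro l
  induction l with
  | nil => simp
  | cons x xs ih =>
    intro _
    by_cases hxs : xs = []
    · subst hxs; simp
    · have h := ih hxs
      simp only [List.foldr_cons]
      rcases le_total x (xs.foldr max 0) with h1 | h1
      · rw [max_eq_right h1]; exact List.mem_cons_of_mem _ h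
      · rw [max_eq_left h1]; exact List.mem_cons_self

lemma le_foldr_max {a : ℕ} : ∀ {l : List ℕ}, a ∈ l → a ≤ l.foldr max 0 := by
  intro l h
  induction l with
  | nil => simp at h
  | cons x xs ih =>
    rcases List.mem_cons.mp h with rfl | h
    · exact le_max_left _ _
    · exact le_trans (ih h) (le_max_right _ _)

lemma ssFuel_congr : ∀ (N f g : ℕ) (w : List ℕ), w.length ≤ N → w.length ≤ f → w.length ≤ g →
    ssFuel f w = ssFuel g w := by
  intro N
  induction N with
  | zero =>
    intro f g w hN _ _
    rw [List.length_eq_zero_iff.mp (Nat.le_zero.mp hN)]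
    simp [ssFuel_nil]
  | succ N ih =>
    intro f g w hN hf hg
    match w with
    | [] => simp [ssFuel_nil]
    | x :: xs =>
      simp only [List.length_cons] at hN hf hg
      obtain ⟨f', rfl⟩ : ∃ f', f = f' + 1 := ⟨f - 1, by omega⟩
      obtain ⟨g', rfl⟩ : ∃ g', g = g' + 1 := ⟨g - 1, by omega⟩
      have hmem : (x :: xs).foldr max 0 ∈ x :: xs := foldr_max_mem _ (by simp)
      have hidx : (x :: xs).idxOf ((x :: xs).foldr max 0) < (x :: xs).length :=
        List.idxOf_lt_length_iff.mpr hmem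
      simp only [List.length_cons] at hidx
      show ssFuel f' _ ++ ssFuel f' _ ++ _ = ssFuel g' _ ++ ssFuel g' _ ++ _
      rw [ih f' g' _ (by rw [List.length_take]; omega) (by rw [List.length_take]; omega)
            (by rw [List.length_take]; omega),
          ih f' g' _ (by rw [List.length_drop]; simp; omega)
            (by rw [List.length_drop]; simp; omega) (by rw [List.length_drop]; simp; omega)]

lemma ssFuel_eq (f : ℕ) (w : List ℕ) (h : w.length ≤ f) : ssFuel f w = stackSort w :=
  ssFuel_congr w.length f w.length w le_rfl h le_rfl

lemma stackSort_split {L R : List ℕ} {m : ℕ} (hL : ∀ y ∈ L, y < m) (hR : ∀ y ∈ R, y < m) :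
    stackSort (L ++ m :: R) = stackSort L ++ stackSort R ++ [m] := by
  have hmax : (L ++ m :: R).foldr max 0 = m := by
    refine le_antisymm ?_ (le_foldr_max (by simp))
    have hmem := foldr_max_mem (L ++ m :: R) (by simp)
    rcases List.mem_append.mp hmem with h | h
    · exact le_of_lt (hL _ h)
    · rcases List.mem_cons.mp h with h | h
      · exact le_of_eq h
      · exact le_of_lt (hR _ h)
  have hnm : m ∉ L := fun h => lt_irrefl m (hL _ h)
  have hidx : (L ++ m :: R).idxOf ((L ++ m :: R).foldr max 0) = L.length := by
    rw [hmax, List.idxOf_append_of_notMem hnm, List.idxOf_cons_self]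
    omega
  have htake : (L ++ m :: R).take ((L ++ m :: R).idxOf ((L ++ m :: R).foldr max 0)) = L := by
    rw [hidx, List.take_left]
  have hdrop : (L ++ m :: R).drop ((L ++ m :: R).idxOf ((L ++ m :: R).foldr max 0) + 1) = R := by
    rw [hidx]
    have h2 : L ++ m :: R = (L ++ [m]) ++ R := by simp
    have h3 : L.length + 1 = (L ++ [m]).length := by simp
    rw [h2, h3, List.drop_left]
  rcases List.exists_cons_of_ne_nil (show L ++ m :: R ≠ [] by simp) with ⟨x, xs, hxxs⟩
  have hlen : (L ++ m :: R).length = xs.length + 1 := by rw [hxxs]; rfl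
  have step : stackSort (L ++ m :: R)
      = ssFuel xs.length ((L ++ m :: R).take ((L ++ m :: R).idxOf ((L ++ m :: R).foldr max 0)))
        ++ ssFuel xs.length ((L ++ m :: R).drop ((L ++ m :: R).idxOf ((L ++ m :: R).foldr max 0) + 1))
        ++ [(L ++ m :: R).foldr max 0] := by
    show ssFuel (L ++ m :: R).length (L ++ m :: R) = _
    rw [hlen, hxxs]
    rfl
  rw [step, htake, hdrop, hmax]
  have hL' : L.length ≤ xs.length := by
    simp only [List.length_append, List.length_cons] at hlen; omega
  have hR' : R.length ≤ xs.length := by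
    simp only [List.length_append, List.length_cons] at hlen; omega
  rw [ssFuel_eq _ _ hL', ssFuel_eq _ _ hR']

/-! ### chunk 2: Av321, DGE, core induction -/
open List

def Av321 (w : List ℕ) : Prop := ∀ a b c : ℕ, [a, b, c] <+ w → c < b → b < a → False

def DGE (k : ℕ) (w : List ℕ) : Prop :=
  ∃ u x, u ++ [x] <+ w ∧ k ≤ u.length ∧ ∀ y ∈ u, x < y

lemma Av321.sublist {w w' : List ℕ} (h : Av321 w) (hs : w' <+ w) : Av321 w' :=
  fun a b c hsub => h a b c (hsub.trans hs)

lemma DGE.sublist {k : ℕ} {w w' : List ℕ} (h : DGE k w) (hs : w <+ w') : DGE k w' := by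
  obtain ⟨u, x, h1, h2, h3⟩ := h
  exact ⟨u, x, h1.trans hs, h2, h3⟩

lemma DGE_nil {k : ℕ} : ¬ DGE k [] := by
  rintro ⟨u, x, h1, -, -⟩
  have := List.sublist_nil.mp h1
  simp at this

lemma pair_eq_append {α : Type*} {a b : α} {l₁ l₂ : List α} (h : l₁ ++ l₂ = [a, b]) :
    (l₁ = [] ∧ l₂ = [a, b]) ∨ (l₁ = [a] ∧ l₂ = [b]) ∨ (l₁ = [a, b] ∧ l₂ = []) := by
  rcases l₁ with _ | ⟨x, _ | ⟨y, l₁⟩⟩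
  · exact Or.inl ⟨rfl, h⟩
  · obtain ⟨rfl, h2⟩ : x = a ∧ l₂ = [b] := by simpa using h
    exact Or.inr (Or.inl ⟨rfl, h2⟩)
  · obtain ⟨rfl, rfl, h3⟩ : x = a ∧ y = b ∧ l₁ ++ l₂ = [] := by simpa using h
    obtain ⟨rfl, rfl⟩ := List.append_eq_nil_iff.mp h3
    exact Or.inr (Or.inr ⟨rfl, rfl⟩)

lemma triple_eq_append {α : Type*} {a b c : α} {l₁ l₂ : List α} (h : l₁ ++ l₂ = [a, b, c]) :
    (l₁ = [] ∧ l₂ = [a, b, c]) ∨ (l₁ = [a] ∧ l₂ = [b, c]) ∨ (l₁ = [a, b] ∧ l₂ = [c]) ∨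
      (l₁ = [a, b, c] ∧ l₂ = []) := by
  rcases l₁ with _ | ⟨x, l₁⟩
  · exact Or.inl ⟨rfl, h⟩
  · obtain ⟨rfl, h2⟩ : x = a ∧ l₁ ++ l₂ = [b, c] := by simpa using h
    rcases pair_eq_append h2 with ⟨rfl, rfl⟩ | ⟨rfl, rfl⟩ | ⟨rfl, rfl⟩
    · exact Or.inr (Or.inl ⟨rfl, rfl⟩)
    · exact Or.inr (Or.inr (Or.inl ⟨rfl, rfl⟩))
    · exact Or.inr (Or.inr (Or.inr ⟨rfl, rfl⟩))

lemma sorted_no_big {v : List ℕ} {x : ℕ} {R : List ℕ} (h : v ++ [x] <+ R)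
    (hs : List.Pairwise (· < ·) R) : ∀ y ∈ v, y < x := by
  intro y hy
  have h2 : [y, x] <+ v ++ [x] :=
    List.Sublist.append (List.singleton_sublist.mpr hy) (List.Sublist.refl [x])
  exact List.pairwise_iff_forall_sublist.mp hs (h2.trans h)

lemma not_DGE_one_of_sorted {R : List ℕ} (h : List.Pairwise (· < ·) R) : ¬ DGE 1 R := by
  rintro ⟨u, x, hsub, hlen, hgt⟩
  rcases u with _ | ⟨y, u'⟩
  · simp at hlen
  · have h2 : [y, x] <+ R :=
      (List.Sublist.cons₂ y (List.sublist_append_right u' [x])).trans hsub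
    exact absurd (List.pairwise_iff_forall_sublist.mp h h2)
      (not_lt.mpr (le_of_lt (hgt y (by simp))))

lemma core_nil :
    (stackSort [] ~ []) ∧
    (∀ a b : ℕ, [a, b] <+ stackSort [] → b < a → [a, b] <+ ([] : List ℕ)) ∧
    Av321 (stackSort []) ∧
    (∀ k, DGE (k + 2) ([] : List ℕ) ↔ DGE (k + 1) (stackSort [])) ∧
    (¬ DGE 1 ([] : List ℕ) → stackSort [] = []) := by
  rw [stackSort_nil]
  refine ⟨List.Perm.refl _, ?_, ?_, ?_, fun _ => rfl⟩
  · intro a b h _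
    have := List.sublist_nil.mp h
    simp at this
  · intro a b c h _ _
    have := List.sublist_nil.mp h
    simp at this
  · intro k
    exact ⟨fun h => absurd h DGE_nil, fun h => absurd h DGE_nil⟩

lemma core : ∀ (N : ℕ) (w : List ℕ), w.length ≤ N → w.Nodup → Av321 w →
    (stackSort w ~ w) ∧
    (∀ a b : ℕ, [a, b] <+ stackSort w → b < a → [a, b] <+ w) ∧
    Av321 (stackSort w) ∧
    (∀ k, DGE (k + 2) w ↔ DGE (k + 1) (stackSort w)) ∧
    (¬ DGE 1 w → stackSort w = w) := by
  intro N
  induction N with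
  | zero =>
    intro w hN _ _
    rw [List.length_eq_zero_iff.mp (Nat.le_zero.mp hN)]
    exact core_nil
  | succ N ih =>
    intro w hN hnd hav
    by_cases hwnil : w = []
    · rw [hwnil]; exact core_nil
    obtain ⟨L, R, hw⟩ := List.append_of_mem (foldr_max_mem w hwnil)
    obtain ⟨m, hm⟩ : ∃ m, w.foldr max 0 = m := ⟨_, rfl⟩
    rw [hm] at hw
    have hle : ∀ y ∈ w, y ≤ m := by
      intro y hy; rw [← hm]; exact le_foldr_max hy
    clear hm
    subst hw
    -- basic facts
    have hndL : L.Nodup := (List.nodup_append.mp hnd).1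
    have hndmR : (m :: R).Nodup := (List.nodup_append.mp hnd).2.1
    have hdisj : L.Disjoint (m :: R) := (List.nodup_append'.mp hnd).2.2
    have hmnL : m ∉ L := fun h => hdisj h List.mem_cons_self
    have hmnR : m ∉ R := (List.nodup_cons.mp hndmR).1
    have hLm : ∀ y ∈ L, y < m := by
      intro y hy
      refine lt_of_le_of_ne (hle y (by simp [hy])) ?_
      rintro rfl; exact hmnL hy
    have hRm : ∀ y ∈ R, y < m := by
      intro y hy
      refine lt_of_le_of_ne (hle y (by simp [hy])) ?_
      rintro rfl; exact hmnR hy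
    have hLsub : L <+ L ++ m :: R := List.sublist_append_left _ _
    have hmRsub : m :: R <+ L ++ m :: R := List.sublist_append_right _ _
    have hRsub : R <+ L ++ m :: R := (List.Sublist.cons m (List.Sublist.refl R)).trans hmRsub
    have hRsorted : List.Pairwise (· < ·) R := by
      rw [List.pairwise_iff_forall_sublist]
      intro a b hab
      have h3 : [m, a, b] <+ L ++ m :: R := (List.Sublist.cons₂ m hab).trans hmRsub
      have hne' : a ≠ b :=
        List.pairwise_iff_forall_sublist.mp (hnd.sublist hRsub) hab
      rcases lt_or_gt_of_ne hne' with h | h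
      · exact h
      · exact absurd h (fun h' =>
          hav m a b h3 h' (hRm a (hab.subset (by simp))))
    have hlenL : L.length ≤ N := by
      simp only [List.length_append, List.length_cons] at hN; omega
    have hlenR : R.length ≤ N := by
      simp only [List.length_append, List.length_cons] at hN; omega
    have IHL := ih L hlenL hndL (hav.sublist hLsub)
    have IHR := ih R hlenR (hnd.sublist hRsub) (hav.sublist hRsub)
    have hSR : stackSort R = R := IHR.2.2.2.2 (not_DGE_one_of_sorted hRsorted)
    have hS : stackSort (L ++ m :: R) = stackSort L ++ R ++ [m] := by
      rw [stackSort_split hLm hRm, hSR]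
    have hpermL : stackSort L ~ L := IHL.1
    have hSLsub : stackSort L <+ stackSort L ++ R ++ [m] :=
      (List.sublist_append_left _ R).trans (List.sublist_append_left _ [m])
    -- conjunct 1
    have conj1 : stackSort (L ++ m :: R) ~ L ++ m :: R := by
      rw [hS]
      calc stackSort L ++ R ++ [m] ~ L ++ R ++ [m] :=
            List.Perm.append_right [m] (hpermL.append_right R)
        _ = L ++ (R ++ [m]) := by rw [List.append_assoc]
        _ ~ L ++ (m :: R) := List.Perm.append_left L (List.perm_append_singleton m R)
    -- conjunct 2
    have conj2 : ∀ a b : ℕ, [a, b] <+ stackSort (L ++ m :: R) → b < a → [a, b] <+ L ++ m :: R := by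
      intro a b hsub hba
      rw [hS] at hsub
      rcases List.sublist_append_iff.mp hsub with ⟨l₁, l₂, heq, h₁, h₂⟩
      rcases pair_eq_append heq.symm with ⟨rfl, rfl⟩ | ⟨rfl, rfl⟩ | ⟨rfl, rfl⟩
      · have := h₂.length_le; simp at this
      · have hbm : b = m := by simpa using h₂.subset (by simp)
        subst hbm
        exfalso
        rcases List.mem_append.mp (h₁.subset (by simp : a ∈ [a])) with h | h
        · exact absurd (hLm a (hpermL.mem_iff.mp h)) (not_lt.mpr (le_of_lt hba))
        · exact absurd (hRm a h) (not_lt.mpr (le_of_lt hba))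
      · rcases List.sublist_append_iff.mp h₁ with ⟨p₁, p₂, heq2, hp₁, hp₂⟩
        rcases pair_eq_append heq2.symm with ⟨rfl, rfl⟩ | ⟨rfl, rfl⟩ | ⟨rfl, rfl⟩
        · exact absurd (List.pairwise_iff_forall_sublist.mp hRsorted hp₂)
            (not_lt.mpr (le_of_lt hba))
        · have haL : a ∈ L := hpermL.mem_iff.mp (by simpa using hp₁.subset (by simp : a ∈ [a]))
          have hbR : b ∈ R := by simpa using hp₂.subset (by simp : b ∈ [b])
          exact List.Sublist.append (List.singleton_sublist.mpr haL)
            (List.Sublist.cons m (List.singleton_sublist.mpr hbR))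
        · exact (IHL.2.1 a b hp₁ hba).trans hLsub
    -- conjunct 3
    have conj3 : Av321 (stackSort (L ++ m :: R)) := by
      rw [hS]
      intro a b c habc hcb hba
      rcases List.sublist_append_iff.mp habc with ⟨l₁, l₂, heq, h₁, h₂⟩
      rcases triple_eq_append heq.symm with ⟨rfl, rfl⟩ | ⟨rfl, rfl⟩ | ⟨rfl, rfl⟩ | ⟨rfl, rfl⟩
      · have := h₂.length_le; simp at this
      · have := h₂.length_le; simp at this
      · have hcm : c = m := by simpa using h₂.subset (by simp)
        subst hcm
        have hbmem : b ∈ stackSort L ++ R := h₁.subset (by simp)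
        rcases List.mem_append.mp hbmem with h | h
        · exact absurd (hLm b (hpermL.mem_iff.mp h)) (not_lt.mpr (le_of_lt hcb))
        · exact absurd (hRm b h) (not_lt.mpr (le_of_lt hcb))
      · rcases List.sublist_append_iff.mp h₁ with ⟨p₁, p₂, heq2, hp₁, hp₂⟩
        rcases triple_eq_append heq2.symm with ⟨rfl, rfl⟩ | ⟨rfl, rfl⟩ | ⟨rfl, rfl⟩ | ⟨rfl, rfl⟩
        · have : b < c := List.pairwise_iff_forall_sublist.mp hRsorted
            ((List.Sublist.cons a (List.Sublist.refl [b, c])).trans hp₂ |>.trans (List.Sublist.refl R))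
          exact absurd this (not_lt.mpr (le_of_lt hcb))
        · have : b < c := List.pairwise_iff_forall_sublist.mp hRsorted hp₂
          exact absurd this (not_lt.mpr (le_of_lt hcb))
        · have habL : [a, b] <+ L := IHL.2.1 a b hp₁ hba
          have hcR : c ∈ R := by simpa using hp₂.subset (by simp : c ∈ [c])
          have : [a, b, c] <+ L ++ m :: R :=
            List.Sublist.append habL
              (List.Sublist.cons m (List.singleton_sublist.mpr hcR))
          exact hav a b c this hcb hba
        · exact IHL.2.2.1 a b c hp₁ hcb hba
    refine ⟨conj1, conj2, conj3, ?_, ?_⟩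
    · -- conjunct 4
      intro k
      rw [hS]
      have mkDGE : ∀ x : ℕ, x ∈ R →
          k + 1 ≤ L.countP (fun y => decide (x < y)) →
          DGE (k + 1) (stackSort L ++ R ++ [m]) := by
        intro x hxR hcount
        refine ⟨(stackSort L).filter (fun y => decide (x < y)), x, ?_, ?_, ?_⟩
        · refine List.Sublist.trans ?_ (List.sublist_append_left _ [m])
          exact List.Sublist.append List.filter_sublist (List.singleton_sublist.mpr hxR)
        · rw [← List.countP_eq_length_filter, List.Perm.countP_eq _ hpermL]
          exact hcount
        · intro y hy
          exact of_decide_eq_true (List.mem_filter.mp hy).2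
      constructor
      · rintro ⟨u, x, hsub, hlen, hgt⟩
        rcases List.sublist_append_iff.mp hsub with ⟨v₁, v₂, heq, h₁, h₂⟩
        rcases List.eq_nil_or_concat v₂ with rfl | ⟨v₂', x', rfl⟩
        · rw [List.append_nil] at heq
          rw [← heq] at h₁
          exact ((IHL.2.2.2.1 k).mp ⟨u, x, h₁, hlen, hgt⟩).sublist hSLsub
        · rw [List.concat_eq_append, ← List.append_assoc] at heq
          obtain ⟨rfl, hx⟩ := List.append_inj' heq rfl
          have hxx : x = x' := by simpa using hx
          subst hxx
          rw [List.concat_eq_append] at h₂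
          simp only [List.length_append] at hlen
          have hgt₁ : ∀ y ∈ v₁, x < y := fun y hy => hgt y (by simp [hy])
          have hgt₂ : ∀ y ∈ v₂', x < y := fun y hy => hgt y (by simp [hy])
          have hxm : x ≠ m := by
            intro hxe
            have hune : v₁ ++ v₂' ≠ [] := by
              intro h
              obtain ⟨rfl, rfl⟩ := List.append_eq_nil_iff.mp h
              simp at hlen
            obtain ⟨y, hy⟩ := List.exists_mem_of_ne_nil _ hune
            have hyw : y ∈ L ++ m :: R := hsub.subset (List.mem_append.mpr (Or.inl hy))
            have hgy := hgt y hy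
            rw [hxe] at hgy
            exact absurd (hle y hyw) (not_le.mpr hgy)
          have finish : x ∈ R → k + 1 ≤ v₁.length →
              DGE (k + 1) (stackSort L ++ R ++ [m]) := by
            intro hxR hv₁
            apply mkDGE x hxR
            calc k + 1 ≤ v₁.length := hv₁
              _ = v₁.countP (fun y => decide (x < y)) :=
                  (List.countP_eq_length.mpr (fun y hy => decide_eq_true (hgt₁ y hy))).symm
              _ ≤ L.countP (fun y => decide (x < y)) := h₁.countP_le
          -- h₂ : v₂' ++ [x] <+ m :: R = [m] ++ R
          have h₂x : v₂' ++ [x] <+ [m] ++ R := h₂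
          rcases List.sublist_append_iff.mp h₂x with ⟨q₁, q₂, heq2, hq₁, hq₂⟩
          rcases List.eq_nil_or_concat q₂ with rfl | ⟨q₂', x'', rfl⟩
          · -- v₂' ++ [x] = q₁ <+ [m]
            rw [List.append_nil] at heq2
            rw [← heq2] at hq₁
            rcases List.sublist_singleton.mp hq₁ with h | h
            · exfalso; have := congrArg List.length h; simp at this
            · obtain ⟨rfl, hx3⟩ : v₂' = [] ∧ x = m := by
                rcases v₂' with _ | ⟨z, v₂'⟩
                · simpa using h
                · exact absurd (congrArg List.length h) (by simp)
              exact absurd hx3 hxm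
          · rw [List.concat_eq_append, ← List.append_assoc] at heq2
            obtain ⟨rfl, hx2⟩ := List.append_inj' heq2 rfl
            have hxx2 : x = x'' := by simpa using hx2
            subst hxx2
            rw [List.concat_eq_append] at hq₂
            -- hq₂ : q₂' ++ [x] <+ R
            have hq₂' : q₂' = [] := by
              rw [List.eq_nil_iff_forall_not_mem]
              intro y hy
              exact absurd (sorted_no_big hq₂ hRsorted y hy)
                (not_lt.mpr (le_of_lt (hgt₂ y (by simp [hy]))))
            subst hq₂'
            have hxR : x ∈ R := List.singleton_sublist.mp (by simpa using hq₂)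
            have hv₁ : k + 1 ≤ v₁.length := by
              rcases List.sublist_singleton.mp hq₁ with h | h <;> subst h <;>
                simp only [List.length_append, List.length_nil, List.length_cons] at hlen <;>
                omega
            exact finish hxR hv₁
      · rintro ⟨u, x, hsub, hlen, hgt⟩
        have hsub' : u ++ [x] <+ stackSort L ++ (R ++ [m]) := by
          simpa [List.append_assoc] using hsub
        rcases List.sublist_append_iff.mp hsub' with ⟨v₁, v₂, heq, h₁, h₂⟩
        rcases List.eq_nil_or_concat v₂ with rfl | ⟨v₂', x', rfl⟩
        · rw [List.append_nil] at heq
          rw [← heq] at h₁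
          exact ((IHL.2.2.2.1 k).mpr ⟨u, x, h₁, hlen, hgt⟩).sublist hLsub
        · rw [List.concat_eq_append, ← List.append_assoc] at heq
          obtain ⟨rfl, hx⟩ := List.append_inj' heq rfl
          have hxx : x = x' := by simpa using hx
          subst hxx
          rw [List.concat_eq_append] at h₂
          simp only [List.length_append] at hlen
          have hgt₁ : ∀ y ∈ v₁, x < y := fun y hy => hgt y (by simp [hy])
          have hgt₂ : ∀ y ∈ v₂', x < y := fun y hy => hgt y (by simp [hy])
          have hxm : x ≠ m := by
            intro hxe
            have hune : v₁ ++ v₂' ≠ [] := by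
              intro h
              obtain ⟨rfl, rfl⟩ := List.append_eq_nil_iff.mp h
              simp at hlen
            obtain ⟨y, hy⟩ := List.exists_mem_of_ne_nil _ hune
            have hyw : y ∈ stackSort L ++ (R ++ [m]) :=
              hsub'.subset (List.mem_append.mpr (Or.inl hy))
            have hym : y ≤ m := by
              rcases List.mem_append.mp hyw with h | h
              · exact le_of_lt (hLm y (hpermL.mem_iff.mp h))
              · rcases List.mem_append.mp h with h | h
                · exact le_of_lt (hRm y h)
                · simp at h; omega
            have hgy := hgt y hy
            rw [hxe] at hgy
            exact absurd hym (not_le.mpr hgy)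
          -- h₂ : v₂' ++ [x] <+ R ++ [m]
          rcases List.sublist_append_iff.mp h₂ with ⟨q₁, q₂, heq2, hq₁, hq₂⟩
          rcases List.eq_nil_or_concat q₂ with rfl | ⟨q₂', x'', rfl⟩
          · -- v₂' ++ [x] = q₁ <+ R
            rw [List.append_nil] at heq2
            rw [← heq2] at hq₁
            have hv₂' : v₂' = [] := by
              rw [List.eq_nil_iff_forall_not_mem]
              intro y hy
              exact absurd (sorted_no_big hq₁ hRsorted y hy)
                (not_lt.mpr (le_of_lt (hgt₂ y hy)))
            subst hv₂'
            have hxR : x ∈ R := List.singleton_sublist.mp (by simpa using hq₁)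
            refine ⟨L.filter (fun y => decide (x < y)) ++ [m], x, ?_, ?_, ?_⟩
            · rw [List.append_assoc]
              exact List.Sublist.append List.filter_sublist
                (List.Sublist.cons₂ m (List.singleton_sublist.mpr hxR))
            · rw [List.length_append, ← List.countP_eq_length_filter]
              have hc : k + 1 ≤ L.countP (fun y => decide (x < y)) := by
                calc k + 1 ≤ v₁.length := by simpa using hlen
                  _ = v₁.countP (fun y => decide (x < y)) :=
                      (List.countP_eq_length.mpr
                        (fun y hy => decide_eq_true (hgt₁ y hy))).symm
                  _ ≤ (stackSort L).countP (fun y => decide (x < y)) := h₁.countP_le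
                  _ = L.countP (fun y => decide (x < y)) := List.Perm.countP_eq _ hpermL
              simpa using Nat.add_le_add hc (le_refl 1)
            · intro y hy
              rcases List.mem_append.mp hy with h | h
              · exact of_decide_eq_true (List.mem_filter.mp h).2
              · simp at h; subst h; exact hRm x hxR
          · -- q₂ = q₂' ++ [x''] <+ [m]
            rcases List.sublist_singleton.mp hq₂ with h | h
            · have := congrArg List.length h; simp at this
            · have hq2x : q₂' = [] ∧ x'' = m := by
                rcases q₂' with _ | ⟨z, q₂'⟩
                · simpa using h
                · exact absurd (congrArg List.length h) (by simp)
              obtain ⟨rfl, hx''⟩ := hq2x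
              rw [List.concat_eq_append, List.nil_append, hx''] at heq2
              have : x = m := by
                obtain ⟨-, hx3⟩ := List.append_inj' heq2 rfl
                simpa using hx3
              exact absurd this hxm
    · -- conjunct 5
      intro hnot
      have hR0 : R = [] := by
        by_contra hne'
        obtain ⟨r, R', rfl⟩ := List.exists_cons_of_ne_nil hne'
        apply hnot
        refine ⟨[m], r, ?_, by simp, ?_⟩
        · exact (List.Sublist.cons₂ m (List.Sublist.cons₂ r (List.nil_sublist R'))).trans hmRsub
        · intro y hy
          simp at hy
          subst hy
          exact hRm r (by simp)
      subst hR0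
      have hnL : ¬ DGE 1 L := fun h => hnot (h.sublist hLsub)
      rw [hS, IHL.2.2.2.2 hnL]
      simp

lemma word_length {n : ℕ} (π : Equiv.Perm (Fin n)) : (word π).length = n := by simp [word]

lemma word_nodup {n : ℕ} (π : Equiv.Perm (Fin n)) : (word π).Nodup := by
  rw [word, List.nodup_ofFn]
  intro i j h
  simp only [add_left_inj] at h
  exact π.injective (Fin.val_injective h)

lemma sortedWord_sorted (n : ℕ) : List.Pairwise (· < ·) (sortedWord n) := by
  rw [List.pairwise_iff_get]
  intro i j hij
  simp only [sortedWord, List.get_ofFn, Fin.coe_cast]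
  have : (i : ℕ) < j := hij
  show (List.ofFn fun i : Fin n => (i : ℕ) + 1)[(i:ℕ)] < (List.ofFn fun i : Fin n => (i : ℕ) + 1)[(j:ℕ)]
  simp
  omega

lemma word_perm_sorted {n : ℕ} (π : Equiv.Perm (Fin n)) : word π ~ sortedWord n := by
  have h1 : word π = ((List.finRange n).map ⇑π).map (fun j : Fin n => (j : ℕ) + 1) := by
    rw [word, List.ofFn_eq_map, List.map_map]; rfl
  have h2 : sortedWord n = (List.finRange n).map (fun j : Fin n => (j : ℕ) + 1) := by
    rw [sortedWord, List.ofFn_eq_map]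
  rw [h1, h2]
  refine List.Perm.map _ ?_
  refine (List.perm_ext_iff_of_nodup (List.Nodup.map π.injective (List.nodup_finRange n))
    (List.nodup_finRange n)).mpr ?_
  intro a
  simp only [List.mem_map, List.mem_finRange, true_and, iff_true]
  exact ⟨π.symm a, by simp⟩

lemma map_get_sublist' (w : List ℕ) (is : List (Fin w.length)) (h : is.Pairwise (· < ·)) :
    is.map w.get <+ w := by
  rw [List.sublist_iff_exists_fin_orderEmbedding_get_eq]
  have hlen : (is.map w.get).length = is.length := by simp
  refine ⟨OrderEmbedding.ofStrictMono (fun ix => is.get (Fin.cast hlen ix)) ?_, fun ix => ?_⟩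
  · intro a b hab
    have hab' : ((Fin.cast hlen a) : Fin is.length) < Fin.cast hlen b := by
      rw [Fin.lt_def]
      exact hab
    exact List.pairwise_iff_get.mp h _ _ hab'
  · show (is.map w.get).get ix = w.get (is.get (Fin.cast hlen ix))
    simp [List.get_eq_getElem, List.getElem_map]


lemma sorted_of_not_DGE {w : List ℕ} (hnd : w.Nodup) (h : ¬ DGE 1 w) :
    List.Pairwise (· < ·) w := by
  rw [List.pairwise_iff_forall_sublist]
  intro a b hab
  have hne : a ≠ b := List.pairwise_iff_forall_sublist.mp hnd hab
  rcases lt_or_gt_of_ne hne with hl | hl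
  · exact hl
  · exact absurd ⟨[a], b, hab, by simp, by simpa using hl⟩ h

lemma iter_sorts : ∀ (t : ℕ) (n : ℕ) (w : List ℕ), w.Nodup → Av321 w → w ~ sortedWord n →
    (stackSort^[t] w = sortedWord n ↔ ¬ DGE (t + 1) w) := by
  intro t
  induction t with
  | zero =>
    intro n w hnd hav hper
    simp only [Function.iterate_zero, id_eq]
    constructor
    · rintro rfl
      exact not_DGE_one_of_sorted (sortedWord_sorted n)
    · intro h
      haveI : IsAntisymm ℕ (· < ·) := ⟨fun a b h1 h2 => absurd h2 (asymm h1)⟩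
      exact List.Perm.eq_of_pairwise (fun a b _ _ h1 h2 => absurd h2 (asymm h1)) (sorted_of_not_DGE hnd h) (sortedWord_sorted n) hper
  | succ t iht =>
    intro n w hnd hav hper
    rw [Function.iterate_succ_apply]
    have hcore := core w.length w le_rfl hnd hav
    have hnd' : (stackSort w).Nodup := (hcore.1.nodup_iff).mpr hnd
    have hav' : Av321 (stackSort w) := hcore.2.2.1
    have hper' : stackSort w ~ sortedWord n := hcore.1.trans hper
    rw [iht n (stackSort w) hnd' hav' hper']
    exact not_congr (hcore.2.2.2.1 t).symm

lemma word_get_cast {n : ℕ} (π : Equiv.Perm (Fin n)) (p : Fin n) :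
    (word π).get (Fin.cast (word_length π).symm p) = (π p : ℕ) + 1 := by
  exact List.get_ofFn (fun i => (π i : ℕ) + 1) _

lemma word_get_cast' {n : ℕ} (π : Equiv.Perm (Fin n)) (q : Fin (word π).length) :
    (word π).get q = (π (Fin.cast (word_length π) q) : ℕ) + 1 := by
  exact List.get_ofFn (fun i => (π i : ℕ) + 1) q

lemma avoids321_iff {n : ℕ} (π : Equiv.Perm (Fin n)) : Avoids π p321 ↔ Av321 (word π) := by
  constructor
  · intro hA a b c habc hcb hba
    apply hA
    obtain ⟨f, hf⟩ := List.sublist_iff_exists_fin_orderEmbedding_get_eq.mp habc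
    have hv : ∀ (i : ℕ) (hi : i < ([a, b, c] : List ℕ).length),
        (π (Fin.cast (word_length π) (f ⟨i, hi⟩)) : ℕ) + 1 = [a, b, c][i] := by
      intro i hi
      have h := hf ⟨i, hi⟩
      rw [word_get_cast'] at h
      exact h.symm
    have A : ∀ i j : Fin ([a, b, c] : List ℕ).length, (i : ℕ) < (j : ℕ) →
        π (Fin.cast (word_length π) (f j)) < π (Fin.cast (word_length π) (f i)) := by
      rintro ⟨iv, hi⟩ ⟨jv, hj⟩ hij
      simp only at hij
      have hvi := hv iv hi
      have hvj := hv jv hj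
      have hi3 : iv < 3 := by simpa using hi
      have hj3 : jv < 3 := by simpa using hj
      rw [Fin.lt_def]
      interval_cases iv <;> interval_cases jv <;>
        simp only [List.getElem_cons_zero, List.getElem_cons_succ] at hvi hvj <;> omega
    refine ⟨fun i => Fin.cast (word_length π) (f i), ?_, ?_⟩
    · intro i j hij
      rw [Fin.lt_def]
      exact f.strictMono (show (⟨(i : ℕ), i.isLt⟩ : Fin 3) < ⟨(j : ℕ), j.isLt⟩ from hij)
    · intro u v
      have hrev : p321 u < p321 v ↔ v < u := by
        simp only [p321, Fin.revPerm_apply]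
        exact Fin.rev_lt_rev
      rw [hrev]
      constructor
      · intro huv
        exact A v u huv
      · intro huv
        rcases lt_trichotomy v u with h | h | h
        · exact h
        · subst h; exact absurd huv (lt_irrefl _)
        · exact absurd huv (asymm (A u v h))
  · intro hAv
    rintro ⟨f, hmono, hcond⟩
    have h01 : π (f 1) < π (f 0) := by
      rw [← hcond 1 0]
      simp only [p321, Fin.revPerm_apply]
      rw [Fin.lt_def]
      decide
    have h12 : π (f 2) < π (f 1) := by
      rw [← hcond 2 1]
      simp only [p321, Fin.revPerm_apply]
      rw [Fin.lt_def]
      decide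
    have hm01 : f 0 < f 1 := hmono (by decide)
    have hm12 : f 1 < f 2 := hmono (by decide)
    have t01 : (Fin.cast (word_length π).symm (f 0) : Fin (word π).length)
        < Fin.cast (word_length π).symm (f 1) := by rw [Fin.lt_def]; exact hm01
    have t12 : (Fin.cast (word_length π).symm (f 1) : Fin (word π).length)
        < Fin.cast (word_length π).symm (f 2) := by rw [Fin.lt_def]; exact hm12
    have hpair : List.Pairwise (· < ·)
        [Fin.cast (word_length π).symm (f 0), Fin.cast (word_length π).symm (f 1),
          Fin.cast (word_length π).symm (f 2)] := by
      refine List.Pairwise.cons ?_ (List.Pairwise.cons ?_ (List.Pairwise.cons ?_ List.Pairwise.nil))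
      · intro b hb
        rcases List.mem_cons.mp hb with rfl | hb
        · exact t01
        · rcases List.mem_cons.mp hb with rfl | hb
          · exact t01.trans t12
          · simp at hb
      · intro b hb
        rcases List.mem_cons.mp hb with rfl | hb
        · exact t12
        · simp at hb
      · intro b hb
        simp at hb
    have hsub := map_get_sublist' (word π) _ hpair
    rw [List.map_cons, List.map_cons, List.map_cons, List.map_nil,
      word_get_cast, word_get_cast, word_get_cast] at hsub
    exact hAv _ _ _ hsub (Nat.succ_lt_succ h12) (Nat.succ_lt_succ h01)

lemma finRotate_val_of_ne_last {t : ℕ} {i : Fin (t + 2)} (h : i ≠ Fin.last (t + 1)) :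
    ((finRotate (t + 2)) i : ℕ) = (i : ℕ) + 1 := by
  rw [finRotate_succ_apply, Fin.val_add_one]
  simp [h]

lemma avoidsRot_iff {n t : ℕ} (π : Equiv.Perm (Fin n)) (hAv : Av321 (word π)) :
    Avoids π (finRotate (t + 2)) ↔ ¬ DGE (t + 1) (word π) := by
  constructor
  · intro hA hDGE
    apply hA
    obtain ⟨u, x, hsub, hlen, hgt⟩ := hDGE
    set u' := u.take (t + 1) with hu'
    have hu'len : u'.length = t + 1 := by rw [hu', List.length_take]; omega
    have hsub' : u' ++ [x] <+ word π :=
      (List.Sublist.append (List.take_sublist _ _) (List.Sublist.refl _)).trans hsub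
    have hgt' : ∀ y ∈ u', x < y := fun y hy => hgt y (List.take_subset _ _ hy)
    have hndv : (u' ++ [x]).Nodup := hsub'.nodup (word_nodup π)
    have hndu' : u'.Nodup := (List.nodup_append.mp hndv).1
    have hu'sorted : List.Pairwise (· < ·) u' := by
      rw [List.pairwise_iff_forall_sublist]
      intro a b hab
      have h3 : [a, b, x] <+ word π :=
        (List.Sublist.append hab (List.Sublist.refl [x])).trans hsub'
      have hne : a ≠ b := List.pairwise_iff_forall_sublist.mp hndu' hab
      rcases lt_or_gt_of_ne hne with h | h
      · exact h
      · exact absurd h (fun h' => hAv a b x h3 (hgt' b (hab.subset (by simp))) h')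
    have hvlen : (u' ++ [x]).length = t + 2 := by simp [hu'len]
    obtain ⟨f, hf⟩ := List.sublist_iff_exists_fin_orderEmbedding_get_eq.mp hsub'
    set F : Fin (t + 2) → Fin n :=
      fun i => Fin.cast (word_length π) (f (Fin.cast hvlen.symm i)) with hF
    have hFmono : StrictMono F := by
      intro i j hij
      rw [Fin.lt_def]
      exact f.strictMono (show Fin.cast hvlen.symm i < Fin.cast hvlen.symm j by
        rw [Fin.lt_def]; exact hij)
    have hval : ∀ i : Fin (t + 2),
        (π (F i) : ℕ) + 1 = (u' ++ [x]).get (Fin.cast hvlen.symm i) := by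
      intro i
      have h := hf (Fin.cast hvlen.symm i)
      rw [word_get_cast'] at h
      exact h.symm
    have hgetl : ∀ (i : Fin (t + 2)) (hi' : (i : ℕ) < u'.length),
        (u' ++ [x]).get (Fin.cast hvlen.symm i) = u'.get ⟨(i : ℕ), hi'⟩ := by
      intro i hi'
      rw [List.get_eq_getElem, List.get_eq_getElem]
      exact List.getElem_append_left hi'
    have hgetlast : (u' ++ [x]).get (Fin.cast hvlen.symm (Fin.last (t + 1))) = x := by
      rw [List.get_eq_getElem]
      rw [List.getElem_append_right (by rw [hu'len]; exact le_refl _)]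
      simp [hu'len]
    have hB : ∀ i : Fin (t + 2), i ≠ Fin.last (t + 1) → π (F (Fin.last (t + 1))) < π (F i) := by
      intro i hi
      have hi' : (i : ℕ) < u'.length := by
        rw [hu'len]
        exact Fin.val_lt_last hi
      have h1 := hval i
      rw [hgetl i hi'] at h1
      have h2 := hval (Fin.last (t + 1))
      rw [hgetlast] at h2
      have hmem : u'.get ⟨(i : ℕ), hi'⟩ ∈ u' := List.get_mem _ _
      have h3 := hgt' _ hmem
      rw [Fin.lt_def]
      omega
    have hA1 : ∀ i j : Fin (t + 2), (i : ℕ) < (j : ℕ) → j ≠ Fin.last (t + 1) →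
        π (F i) < π (F j) := by
      intro i j hij hj
      have hj' : (j : ℕ) < u'.length := by rw [hu'len]; exact Fin.val_lt_last hj
      have hi' : (i : ℕ) < u'.length := by omega
      have h1 := hval i
      rw [hgetl i hi'] at h1
      have h2 := hval j
      rw [hgetl j hj'] at h2
      have h3 : u'.get ⟨(i : ℕ), hi'⟩ < u'.get ⟨(j : ℕ), hj'⟩ :=
        List.pairwise_iff_get.mp hu'sorted _ _
          (show (⟨(i : ℕ), hi'⟩ : Fin u'.length) < ⟨(j : ℕ), hj'⟩ from hij)
      rw [Fin.lt_def]
      omega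
    refine ⟨F, hFmono, ?_⟩
    intro a b
    by_cases hb : b = Fin.last (t + 1)
    · subst hb
      apply iff_of_false
      · rw [finRotate_last]
        exact Fin.not_lt_zero _
      · by_cases ha : a = Fin.last (t + 1)
        · subst ha; exact lt_irrefl _
        · exact asymm (hB a ha)
    · by_cases ha : a = Fin.last (t + 1)
      · subst ha
        apply iff_of_true
        · rw [finRotate_last, Fin.lt_def]
          have hrb := finRotate_val_of_ne_last hb
          have h0 : (((0 : Fin (t + 2))) : ℕ) = 0 := rfl
          omega
        · exact hB b hb
      · have hra := finRotate_val_of_ne_last ha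
        have hrb := finRotate_val_of_ne_last hb
        constructor
        · intro h
          rw [Fin.lt_def] at h
          exact hA1 a b (by omega) hb
        · intro h
          rw [Fin.lt_def]
          rcases lt_trichotomy (a : ℕ) (b : ℕ) with hc | hc | hc
          · omega
          · exact absurd (Fin.ext hc : a = b) (by rintro rfl; exact lt_irrefl _ h)
          · exact absurd h (asymm (hA1 b a hc ha))
  · intro hnd'
    rintro ⟨f, hmono, hcond⟩
    apply hnd'
    have hrot0 : ∀ i : Fin (t + 2), i ≠ Fin.last (t + 1) →
        0 < ((finRotate (t + 2)) i : ℕ) := by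
      intro i hi
      rw [finRotate_val_of_ne_last hi]
      omega
    have hlastlt : ∀ i : Fin (t + 2), i ≠ Fin.last (t + 1) →
        π (f (Fin.last (t + 1))) < π (f i) := by
      intro i hi
      rw [← hcond]
      rw [Fin.lt_def, finRotate_last]
      simpa using hrot0 i hi
    have hpair : List.Pairwise (· < ·)
        (((List.finRange (t + 1)).map
            (fun i : Fin (t + 1) => Fin.cast (word_length π).symm (f i.castSucc)))
          ++ [Fin.cast (word_length π).symm (f (Fin.last (t + 1)))]) := by
      rw [List.pairwise_append]
      refine ⟨?_, List.pairwise_singleton _ _, ?_⟩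
      · refine List.Pairwise.map _ ?_ (List.pairwise_lt_finRange (t + 1))
        intro p q hpq
        rw [Fin.lt_def]
        exact hmono (show p.castSucc < q.castSucc by rwa [Fin.castSucc_lt_castSucc_iff])
      · intro p hp q hq
        simp only [List.mem_map] at hp
        obtain ⟨i, -, rfl⟩ := hp
        simp only [List.mem_singleton] at hq
        subst hq
        rw [Fin.lt_def]
        exact hmono (Fin.castSucc_lt_last i)
    have hsub := map_get_sublist' (word π) _ hpair
    rw [List.map_append, List.map_map, List.map_cons, List.map_nil] at hsub
    refine ⟨(List.finRange (t + 1)).map (fun i : Fin (t + 1) => ((π (f i.castSucc) : ℕ) + 1)),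
      (π (f (Fin.last (t + 1))) : ℕ) + 1, ?_, by simp, ?_⟩
    · have e1 : ((word π).get ∘ fun i : Fin (t + 1) =>
          Fin.cast (word_length π).symm (f i.castSucc))
          = fun i : Fin (t + 1) => (π (f i.castSucc) : ℕ) + 1 := by
        funext i
        simp only [Function.comp_apply]
        exact word_get_cast π (f i.castSucc)
      have e2 : (word π).get (Fin.cast (word_length π).symm (f (Fin.last (t + 1))))
          = (π (f (Fin.last (t + 1))) : ℕ) + 1 := word_get_cast π _
      rw [e1, e2] at hsub
      exact hsub
    · intro y hy
      simp only [List.mem_map] at hy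
      obtain ⟨i, -, rfl⟩ := hy
      have h5 := hlastlt i.castSucc (Fin.castSucc_lt_last i).ne
      rw [Fin.lt_def] at h5
      omega

end Stmt7Aux

/-- `S_n^t(321) = S_n(321, 23⋯(t+2)1)` for every `t ≥ 1`. -/
theorem stmt7 (n t : ℕ) (ht : 1 ≤ t) :
    ∀ π : Equiv.Perm (Fin n),
      (StackSortable t π ∧ Avoids π p321) ↔
        (Avoids π p321 ∧ Avoids π (finRotate (t + 2))) := by
  intro π
  have hnd := word_nodup π
  have hper := word_perm_sorted π
  constructor
  · rintro ⟨hss, h321⟩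
    have hAv : Av321 (word π) := (avoids321_iff π).mp h321
    refine ⟨h321, (avoidsRot_iff π hAv).mpr ?_⟩
    exact (iter_sorts t n (word π) hnd hAv hper).mp hss
  · rintro ⟨h321, hrot⟩
    have hAv : Av321 (word π) := (avoids321_iff π).mp h321
    exact ⟨(iter_sorts t n (word π) hnd hAv hper).mpr ((avoidsRot_iff π hAv).mp hrot), h321⟩

end
end

section
/- For a 321-avoiding permutation π of [n], the number of inversions of π equals the sum over all right-to-left minima π_j of (j − π_j). -/
open scoped Classical
noncomputable section

lemma no321_s13 {n : ℕ} (π : Equiv.Perm (Fin n)) (h : Avoids π p321)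
    {i j k : Fin n} (hij : i < j) (hjk : j < k) (h1 : π j < π i) (h2 : π k < π j) : False := by
  apply h
  refine ⟨![i, j, k], ?_, ?_⟩
  · intro a b hab
    fin_cases a <;> fin_cases b <;>
      first
        | exact absurd hab (by decide)
        | exact hij | exact hjk | exact hij.trans hjk
  · intro a b
    fin_cases a <;> fin_cases b
    · exact iff_of_false (by decide) (lt_irrefl _)
    · exact iff_of_false (by decide) (asymm h1)
    · exact iff_of_false (by decide) (asymm (h2.trans h1))
    · exact iff_of_true (by decide) h1
    · exact iff_of_false (by decide) (lt_irrefl _)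
    · exact iff_of_false (by decide) (asymm h2)
    · exact iff_of_true (by decide) (h2.trans h1)
    · exact iff_of_true (by decide) h2
    · exact iff_of_false (by decide) (lt_irrefl _)

lemma card_lt_fiber {n : ℕ} (π : Equiv.Perm (Fin n)) (j : Fin n)
    (hj : ∀ k, j < k → π j < π k) :
    (Finset.univ.filter fun i : Fin n => i < j ∧ π j < π i).card = (j : ℕ) - (π j : ℕ) := by
  classical
  have hsmall : (Finset.univ.filter fun i : Fin n => π i < π j) =
      Finset.univ.filter fun i : Fin n => i < j ∧ π i < π j := by
    ext i
    simp only [Finset.mem_filter, Finset.mem_univ, true_and]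
    constructor
    · intro hi
      refine ⟨?_, hi⟩
      rcases lt_trichotomy i j with h' | h' | h'
      · exact h'
      · exact absurd (h' ▸ hi) (lt_irrefl _)
      · exact absurd (hj i h') (asymm hi)
    · exact fun h => h.2
  have hcard_small : (Finset.univ.filter fun i : Fin n => π i < π j).card = (π j : ℕ) := by
    have : (Finset.univ.filter fun i : Fin n => π i < π j) =
        (Finset.univ.filter fun v : Fin n => v < π j).map π.symm.toEmbedding := by
      ext i
      simp [Finset.mem_map_equiv]
    have h2 : (Finset.univ.filter fun v : Fin n => v < π j) = Finset.Iio (π j) := by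
      ext v; simp
    rw [this, Finset.card_map, h2, Fin.card_Iio]
  set B := Finset.univ.filter fun i : Fin n => i < j ∧ π i < π j with hB
  set C := Finset.univ.filter fun i : Fin n => i < j ∧ π j < π i with hC
  have hdisj : Disjoint B C := by
    rw [Finset.disjoint_left]
    intro i hiB hiC
    simp only [hB, hC, Finset.mem_filter, Finset.mem_univ, true_and] at hiB hiC
    exact absurd hiB.2 (asymm hiC.2)
  have hu : B ∪ C = Finset.Iio j := by
    ext i
    simp only [hB, hC, Finset.mem_union, Finset.mem_filter, Finset.mem_univ, true_and,
      Finset.mem_Iio]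
    constructor
    · rintro (h' | h') <;> exact h'.1
    · intro hi
      have hne : π i ≠ π j := fun e => absurd (π.injective e) (ne_of_lt hi)
      rcases hne.lt_or_gt with h' | h'
      · exact Or.inl ⟨hi, h'⟩
      · exact Or.inr ⟨hi, h'⟩
  have hcu := Finset.card_union_of_disjoint hdisj
  rw [hu, Fin.card_Iio] at hcu
  have hBcard : B.card = (π j : ℕ) := hsmall ▸ hcard_small
  omega


/-- For a 321-avoiding `π`, the number of inversions equals the sum of `j − π_j` over
all right-to-left minima `π_j`. -/
theorem stmt13 (n : ℕ) (π : Equiv.Perm (Fin n)) (h : Avoids π p321) :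
    invNum π =
      ∑ j ∈ Finset.univ.filter (fun j : Fin n => ∀ k, j < k → π j < π k),
        ((j : ℕ) - (π j : ℕ)) := by
  classical
  rw [invNum, Finset.card_eq_sum_card_fiberwise
    (f := fun p : Fin n × Fin n => p.2) (t := Finset.univ) (fun p _ => Finset.mem_univ _)]
  have hfiber : ∀ j : Fin n,
      ((Finset.univ.filter fun p : Fin n × Fin n => p.1 < p.2 ∧ π p.2 < π p.1).filter
          fun p => p.2 = j).card
        = (Finset.univ.filter fun i : Fin n => i < j ∧ π j < π i).card := by
    intro j
    apply Finset.card_nbij' (fun p => p.1) (fun i => (i, j))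
    · rintro ⟨a, b⟩ hp
      simp only [Finset.mem_coe, Finset.mem_filter, Finset.mem_univ, true_and] at hp ⊢
      obtain ⟨⟨h1, h2⟩, rfl⟩ := hp
      exact ⟨h1, h2⟩
    · intro i hi
      simp only [Finset.mem_coe, Finset.mem_filter, Finset.mem_univ, true_and] at hi ⊢
      exact ⟨⟨hi.1, hi.2⟩, trivial⟩
    · rintro ⟨a, b⟩ hp
      simp only [Finset.mem_coe, Finset.mem_filter, Finset.mem_univ, true_and] at hp
      obtain ⟨-, rfl⟩ := hp
      rfl
    · intro i _; rfl
  have hzero : ∀ j ∈ Finset.univ,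
      ((Finset.univ.filter fun p : Fin n × Fin n => p.1 < p.2 ∧ π p.2 < π p.1).filter
          fun p => p.2 = j).card ≠ 0 → (∀ k, j < k → π j < π k) := by
    intro j _ hne k hjk
    rw [hfiber j] at hne
    obtain ⟨i, hi⟩ := Finset.card_ne_zero.mp hne
    simp only [Finset.mem_filter, Finset.mem_univ, true_and] at hi
    by_contra hle
    have hne' : π k ≠ π j := fun e => absurd (π.injective e) (ne_of_gt hjk)
    have hkj : π k < π j := lt_of_le_of_ne (not_lt.mp hle) hne'
    exact no321_s13 π h hi.1 hjk hi.2 hkj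
  rw [← Finset.sum_filter_of_ne hzero]
  refine Finset.sum_congr rfl fun j hj => ?_
  rw [hfiber j]
  exact card_lt_fiber π j (Finset.mem_filter.mp hj).2


end
end
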